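/- Let p ≥ 1 be an integer and let d be a formal power series in two variables x, y over ℝ such that the coefficient of x^0 y^j in d is 0 for every 0 ≤ j ≤ p and the coefficient of x^1 y^0 in d is 1. If η is a polynomial in x, y over ℝ of total degree strictly less than p such that every coefficient of the power series d·η of total degree at most p vanishes, then η = 0. -/

import Mathlib

/-- The exponent `(i, j)` of the monomial `x^i y^j`, as a finitely supported
function on `Fin 2`. -/
noncomputable def expPair (i j : ℕ) : Fin 2 →₀ ℕ := Finsupp.equivFunOnFinite.symm ![i, j]

@[simp] lemma expPair_apply_zero (i j : ℕ) : expPair i j 0 = i := rfl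
@[simp] lemma expPair_apply_one (i j : ℕ) : expPair i j 1 = j := rfl

lemma eq_expPair (a : Fin 2 →₀ ℕ) : a = expPair (a 0) (a 1) := by
  ext k; fin_cases k <;> rfl

lemma expPair_add (a b c e : ℕ) : expPair a b + expPair c e = expPair (a+c) (b+e) := by
  ext k; fin_cases k <;> simp

lemma expPair_inj {a b c e : ℕ} (h : expPair a b = expPair c e) : a = c ∧ b = e := by
  refine ⟨?_, ?_⟩
  · have := DFunLike.congr_fun h 0; simpa using this
  · have := DFunLike.congr_fun h 1; simpa using this


/-- Let `p ≥ 1` and let `d` be a formal power series in two variables `x, y` over `ℝ`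
such that the coefficient of `x^0 y^j` in `d` is `0` for every `0 ≤ j ≤ p` and the
coefficient of `x^1 y^0` in `d` is `1`.  If `η` is a polynomial in `x, y` over `ℝ` of
total degree strictly less than `p` such that every coefficient of the power series
`d·η` of total degree at most `p` vanishes, then `η = 0`. -/
theorem eta_eq_zero_of_vanishing (p : ℕ) (hp : 1 ≤ p)
    (d : MvPowerSeries (Fin 2) ℝ)
    (hd : ∀ j : ℕ, j ≤ p → MvPowerSeries.coeff (expPair 0 j) d = 0)
    (hd1 : MvPowerSeries.coeff (expPair 1 0) d = 1)
    (η : MvPolynomial (Fin 2) ℝ) (hη : η.totalDegree < p)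
    (hvanish : ∀ i j : ℕ, i + j ≤ p →
      MvPowerSeries.coeff (expPair i j) (d * (η : MvPowerSeries (Fin 2) ℝ)) = 0) :
    η = 0 := by
  have key : ∀ i j : ℕ, i + j < p → MvPolynomial.coeff (expPair i j) η = 0 := by
    intro i
    induction i using Nat.strong_induction_on with
    | _ i ihi =>
      intro j
      induction j using Nat.strong_induction_on with
      | _ j ihj =>
        intro hij
        have h := hvanish (i+1) j (by omega)
        rw [MvPowerSeries.coeff_mul] at h
        rw [Finset.sum_eq_single_of_mem (expPair 1 0, expPair i j) ?mem ?others] at h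
        · rw [hd1, one_mul, MvPolynomial.coeff_coe] at h
          exact h
        case mem =>
          rw [Finset.HasAntidiagonal.mem_antidiagonal, expPair_add, Nat.add_comm 1 i, Nat.zero_add]
        case others =>
          rintro ⟨a, b⟩ hab hne
          rw [Finset.HasAntidiagonal.mem_antidiagonal] at hab
          have ha0 : a 0 + b 0 = i + 1 := by
            have := DFunLike.congr_fun hab 0; simpa [Finsupp.add_apply] using this
          have ha1 : a 1 + b 1 = j := by
            have := DFunLike.congr_fun hab 1; simpa [Finsupp.add_apply] using this
          rcases Nat.eq_zero_or_pos (a 0) with h0 | h0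
          · -- d coefficient vanishes
            have : a = expPair 0 (a 1) := by conv_lhs => rw [eq_expPair a, h0]
            rw [this, hd (a 1) (by omega), zero_mul]
          · rcases Nat.lt_or_ge (b 0) i with hb0 | hb0
            · -- b 0 < i : inner η coefficient vanishes by outer IH
              rw [eq_expPair b, MvPolynomial.coeff_coe,
                ihi (b 0) hb0 (b 1) (by omega), mul_zero]
            · -- b 0 = i, so a 0 = 1
              have hb0' : b 0 = i := by omega
              have ha0' : a 0 = 1 := by omega
              have ha1' : a 1 ≠ 0 := by
                intro hz
                apply hne
                have hb1 : b 1 = j := by omega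
                rw [eq_expPair a, eq_expPair b, ha0', hz, hb0', hb1]
              rw [eq_expPair b, hb0', MvPolynomial.coeff_coe,
                ihj (b 1) (by omega) (by omega), mul_zero]
  ext m
  rw [MvPolynomial.coeff_zero]
  by_cases hm : m 0 + m 1 < p
  · rw [eq_expPair m]; exact key _ _ hm
  · apply MvPolynomial.coeff_eq_zero_of_totalDegree_lt
    have : ∑ i ∈ m.support, m i = m 0 + m 1 := by
      rw [Finset.sum_subset (Finset.subset_univ m.support)
        (by intro x _ hx; simpa using hx), Fin.sum_univ_two]
    omega
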